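/- Suppose l(·,v) is convex and differentiable for each v, the distribution map is ε-sensitive, l(x,·) is L₂-Lipschitz in v, and ‖∇_x l(x,v)‖ ≤ L₃. Let x^{r+1} = x^r − η^r E_{v∼f_v(x^r)}[∇_x l(x^r,v)] for a minimization problem with optimum x* of f(x) = E_{v∼f_v(x)}[l(x,v)]. Then after k iterations, min_{0≤r≤k} (f(x^r) − f(x*)) ≤ [ε L₂ Σ_{r=0}^k η^r ‖x* − x^r‖] / Σ_{r=0}^k η^r + [‖x⁰ − x*‖² + L₃² Σ_{r=0}^k (η^r)²] / (2 Σ_{r=0}^k η^r). -/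

import Mathlib

open MeasureTheory
open scoped RealInnerProductSpace

lemma grad_ineq_aux {E : Type*} [NormedAddCommGroup E] [InnerProductSpace ℝ E] [CompleteSpace E]
    {f : E → ℝ} {g x y : E} (hc : ConvexOn ℝ Set.univ f) (hg : HasGradientAt f g x) :
    ⟪g, y - x⟫ ≤ f y - f x := by
  have hline : HasDerivAt (fun t : ℝ => x + t • (y - x)) (y - x) 0 := by
    simpa using ((hasDerivAt_id (0:ℝ)).smul_const (y - x)).const_add x
  have hd : HasDerivAt (fun t : ℝ => f (x + t • (y - x))) ⟪g, y - x⟫ 0 := by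
    have hx0 : x + (0:ℝ) • (y - x) = x := by simp
    have h1 := HasFDerivAt.comp_hasDerivAt 0 (hx0 ▸ hg.hasFDerivAt) hline
    simp at h1
    exact h1
  rw [hasDerivAt_iff_tendsto_slope] at hd
  have hd' := hd.mono_left (nhdsWithin_mono 0 (fun t (ht : t ∈ Set.Ioi 0) => ne_of_gt ht))
  refine le_of_tendsto hd' ?_
  filter_upwards [Ioc_mem_nhdsGT_of_mem (by norm_num : (0:ℝ) ∈ Set.Ico 0 1)] with t ht
  have hco : f (x + t • (y - x)) ≤ (1 - t) * f x + t * f y := by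
    have h2 := hc.2 (Set.mem_univ x) (Set.mem_univ y)
      (by linarith [ht.2] : (0:ℝ) ≤ 1 - t) (le_of_lt ht.1) (by ring)
    have h3 : x + t • (y - x) = (1 - t) • x + t • y := by module
    rw [h3]
    simpa using h2
  have h0 : f (x + (0:ℝ) • (y - x)) = f x := by simp
  rw [slope_def_field, h0, sub_zero, div_le_iff₀ ht.1]
  nlinarith [hco]

/-- Convergence of approximate (expected-)gradient descent under convexity in the
decision-dependent setting: with `ε`-sensitive distribution map (Kantorovich–Rubinstein
dual form), convex differentiable loss `l(·,v)`, `L₂`-Lipschitzness of `l(x,·)` in `v`,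
gradient bound `L₃`, iterates `x^{r+1} = x^r − η^r E_{v∼F(x^r)}[∇ₓ l(x^r,v)]` and
minimizer `x*` of `f(x) = E_{v∼F(x)}[l(x,v)]`, after `k` iterations
`min_{0≤r≤k} (f(x^r) − f(x*))` is bounded as stated. -/
theorem convex_convergence_bound
    {n m : ℕ}
    (F : EuclideanSpace ℝ (Fin n) → Measure (EuclideanSpace ℝ (Fin m)))
    (hprob : ∀ x, IsProbabilityMeasure (F x))
    (l : EuclideanSpace ℝ (Fin n) → EuclideanSpace ℝ (Fin m) → ℝ)
    (gl : EuclideanSpace ℝ (Fin n) → EuclideanSpace ℝ (Fin m) → EuclideanSpace ℝ (Fin n))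
    (ε L₂ L₃ : ℝ) (hε : 0 ≤ ε) (hL₂ : 0 ≤ L₂) (hL₃ : 0 ≤ L₃)
    -- ε-sensitivity via Kantorovich–Rubinstein duality
    (hsens : ∀ x₁ x₂, ∀ g : EuclideanSpace ℝ (Fin m) → ℝ, LipschitzWith 1 g →
      |(∫ v, g v ∂(F x₁)) - ∫ v, g v ∂(F x₂)| ≤ ε * ‖x₁ - x₂‖)
    -- l(·,v) is convex and differentiable with gradient gl
    (hconv : ∀ v, ConvexOn ℝ Set.univ (fun x => l x v))
    (hgrad : ∀ x v, HasGradientAt (fun y => l y v) (gl x v) x)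
    -- l(x,·) is L₂-Lipschitz in v
    (hlipv : ∀ x, LipschitzWith (Real.toNNReal L₂) (l x))
    -- bounded gradient
    (hgbd : ∀ x v, ‖gl x v‖ ≤ L₃)
    -- integrability
    (hint : ∀ x y, Integrable (l y) (F x) ∧ Integrable (gl y) (F x))
    (η : ℕ → ℝ) (hη : ∀ r, 0 < η r)
    (x : ℕ → EuclideanSpace ℝ (Fin n))
    (hupd : ∀ r, x (r + 1) = x r - η r • ∫ v, gl (x r) v ∂(F (x r)))
    (xstar : EuclideanSpace ℝ (Fin n))
    -- x* minimizes the decision-dependent objective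
    (hopt : ∀ y, (∫ v, l xstar v ∂(F xstar)) ≤ ∫ v, l y v ∂(F y))
    (k : ℕ) :
    ∃ r ≤ k,
      (∫ v, l (x r) v ∂(F (x r))) - (∫ v, l xstar v ∂(F xstar)) ≤
        (ε * L₂ * ∑ i ∈ Finset.range (k + 1), η i * ‖xstar - x i‖) /
          (∑ i ∈ Finset.range (k + 1), η i) +
        (‖x 0 - xstar‖ ^ 2 + L₃ ^ 2 * ∑ i ∈ Finset.range (k + 1), (η i) ^ 2) /
          (2 * ∑ i ∈ Finset.range (k + 1), η i) := by
  classical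
  haveI : ∀ z, IsProbabilityMeasure (F z) := hprob
  set φ : ℕ → ℝ := fun r => ∫ v, l (x r) v ∂(F (x r)) with hφ
  set c : ℝ := ∫ v, l xstar v ∂(F xstar) with hc
  set g : ℕ → EuclideanSpace ℝ (Fin n) := fun r => ∫ v, gl (x r) v ∂(F (x r)) with hg
  -- sensitivity for L₂-Lipschitz functions
  have sens' : ∀ (z x₁ x₂ : EuclideanSpace ℝ (Fin n)),
      |(∫ v, l z v ∂(F x₁)) - ∫ v, l z v ∂(F x₂)| ≤ ε * L₂ * ‖x₁ - x₂‖ := by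
    intro z x₁ x₂
    rcases hL₂.lt_or_eq with hpos | heq
    · have hlip1 : LipschitzWith 1 (fun v => L₂⁻¹ * l z v) := by
        apply LipschitzWith.of_dist_le_mul
        intro a b
        have h1 := (hlipv z).dist_le_mul a b
        rw [Real.coe_toNNReal _ hL₂] at h1
        simp only [NNReal.coe_one, one_mul]
        rw [Real.dist_eq, ← mul_sub, abs_mul, abs_of_nonneg (inv_nonneg.mpr hL₂)]
        rw [Real.dist_eq] at h1
        calc L₂⁻¹ * |l z a - l z b| ≤ L₂⁻¹ * (L₂ * dist a b) :=
              mul_le_mul_of_nonneg_left h1 (inv_nonneg.mpr hL₂)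
          _ = dist a b := by field_simp
      have h3 := hsens x₁ x₂ _ hlip1
      rw [integral_const_mul, integral_const_mul, ← mul_sub, abs_mul,
        abs_of_nonneg (inv_nonneg.mpr hL₂)] at h3
      have h4 := mul_le_mul_of_nonneg_left h3 hL₂
      rw [← mul_assoc, mul_inv_cancel₀ hpos.ne', one_mul] at h4
      calc |(∫ v, l z v ∂(F x₁)) - ∫ v, l z v ∂(F x₂)| ≤ L₂ * (ε * ‖x₁ - x₂‖) := h4
        _ = ε * L₂ * ‖x₁ - x₂‖ := by ring
    · -- L₂ = 0 : l z is constant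
      have hconst : ∀ a b, l z a = l z b := by
        intro a b
        have := (hlipv z).dist_le_mul a b
        rw [← heq] at this
        simp at this
        exact dist_le_zero.mp (by simpa using this)
      have heq1 : (∫ v, l z v ∂(F x₁)) = l z 0 := by
        have : (fun v => l z v) = fun _ => l z 0 := funext fun v => hconst v 0
        rw [this]; simp
      have heq2 : (∫ v, l z v ∂(F x₂)) = l z 0 := by
        have : (fun v => l z v) = fun _ => l z 0 := funext fun v => hconst v 0
        rw [this]; simp
      rw [heq1, heq2, sub_self, abs_zero, ← heq]
      positivity
  -- per-step inequality
  have key : ∀ r, η r * (φ r - c) ≤ ε * L₂ * (η r * ‖xstar - x r‖) +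
      (‖x r - xstar‖ ^ 2 - ‖x (r + 1) - xstar‖ ^ 2) / 2 + L₃ ^ 2 * (η r) ^ 2 / 2 := by
    intro r
    have hgb : ‖g r‖ ≤ L₃ := by
      have := norm_integral_le_of_norm_le_const (μ := F (x r))
        (f := fun v => gl (x r) v) (C := L₃) (Filter.Eventually.of_forall (hgbd (x r)))
      simpa using this
    -- convexity + integral
    have hinner : φ r - (∫ v, l xstar v ∂(F (x r))) ≤ ⟪g r, x r - xstar⟫ := by
      have hpt : ∀ v, l (x r) v - l xstar v ≤ ⟪x r - xstar, gl (x r) v⟫ := by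
        intro v
        have h5 := grad_ineq_aux (hconv v) (hgrad (x r) v) (y := xstar)
        have h6 : ⟪x r - xstar, gl (x r) v⟫ = -⟪gl (x r) v, xstar - x r⟫ := by
          rw [real_inner_comm, ← inner_neg_right, neg_sub]
        linarith
      have hi1 : Integrable (fun v => l (x r) v - l xstar v) (F (x r)) :=
        (hint (x r) (x r)).1.sub (hint (x r) xstar).1
      have hi2 : Integrable (fun v => ⟪x r - xstar, gl (x r) v⟫) (F (x r)) :=
        (hint (x r) (x r)).2.const_inner _
      calc φ r - ∫ v, l xstar v ∂(F (x r))
          = ∫ v, (l (x r) v - l xstar v) ∂(F (x r)) := by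
            rw [integral_sub (hint (x r) (x r)).1 (hint (x r) xstar).1]
        _ ≤ ∫ v, ⟪x r - xstar, gl (x r) v⟫ ∂(F (x r)) :=
            integral_mono hi1 hi2 hpt
        _ = ⟪x r - xstar, g r⟫ := integral_inner (hint (x r) (x r)).2 _
        _ = ⟪g r, x r - xstar⟫ := real_inner_comm _ _
    -- sensitivity
    have hsen : (∫ v, l xstar v ∂(F (x r))) ≤ c + ε * L₂ * ‖xstar - x r‖ := by
      have h7 := sens' xstar (x r) xstar
      rw [← hc] at h7
      have h8 := (abs_le.mp h7).2
      have h9 : ‖x r - xstar‖ = ‖xstar - x r‖ := norm_sub_rev _ _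
      linarith [h9 ▸ h8]
    have hA : φ r - c ≤ ⟪g r, x r - xstar⟫ + ε * L₂ * ‖xstar - x r‖ := by linarith
    -- norm identity
    have hnorm : ‖x (r + 1) - xstar‖ ^ 2 = ‖x r - xstar‖ ^ 2
        - 2 * (η r * ⟪g r, x r - xstar⟫) + (η r) ^ 2 * ‖g r‖ ^ 2 := by
      rw [hupd r, show (∫ v, gl (x r) v ∂(F (x r))) = g r from rfl]
      have h10 : x r - η r • g r - xstar = (x r - xstar) - η r • g r := by abel
      rw [h10, norm_sub_sq_real, real_inner_smul_right, norm_smul,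
        real_inner_comm (x r - xstar) (g r), mul_pow, Real.norm_eq_abs, sq_abs]
    have hgb2 : (η r) ^ 2 * ‖g r‖ ^ 2 ≤ L₃ ^ 2 * (η r) ^ 2 := by
      have hsq : ‖g r‖ ^ 2 ≤ L₃ ^ 2 := by nlinarith [norm_nonneg (g r)]
      calc (η r) ^ 2 * ‖g r‖ ^ 2 ≤ (η r) ^ 2 * L₃ ^ 2 :=
            mul_le_mul_of_nonneg_left hsq (sq_nonneg _)
        _ = L₃ ^ 2 * (η r) ^ 2 := by ring
    have hmul := mul_le_mul_of_nonneg_left hA (hη r).le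
    nlinarith [hmul, hnorm, hgb2]
  -- sum over range (k+1)
  set T : ℝ := ∑ i ∈ Finset.range (k + 1), η i with hT
  have hTpos : 0 < T := Finset.sum_pos (fun i _ => hη i) ⟨0, Finset.mem_range.mpr (Nat.succ_pos k)⟩
  set A : ℝ := ε * L₂ * ∑ i ∈ Finset.range (k + 1), η i * ‖xstar - x i‖ with hAdef
  set B : ℝ := ‖x 0 - xstar‖ ^ 2 + L₃ ^ 2 * ∑ i ∈ Finset.range (k + 1), (η i) ^ 2 with hBdef
  have hsum : ∑ i ∈ Finset.range (k + 1), η i * (φ i - c) ≤ A + B / 2 := by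
    calc ∑ i ∈ Finset.range (k + 1), η i * (φ i - c)
        ≤ ∑ i ∈ Finset.range (k + 1), (ε * L₂ * (η i * ‖xstar - x i‖) +
            (‖x i - xstar‖ ^ 2 - ‖x (i + 1) - xstar‖ ^ 2) / 2 + L₃ ^ 2 * (η i) ^ 2 / 2) :=
          Finset.sum_le_sum fun i _ => key i
      _ = ε * L₂ * (∑ i ∈ Finset.range (k + 1), η i * ‖xstar - x i‖) +
            (∑ i ∈ Finset.range (k + 1), (‖x i - xstar‖ ^ 2 - ‖x (i + 1) - xstar‖ ^ 2)) / 2 +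
            L₃ ^ 2 * (∑ i ∈ Finset.range (k + 1), (η i) ^ 2) / 2 := by
          simp only [Finset.sum_add_distrib, ← Finset.sum_div, ← Finset.mul_sum,
            mul_div_assoc]
      _ = A + ((‖x 0 - xstar‖ ^ 2 - ‖x (k + 1) - xstar‖ ^ 2) / 2 +
            L₃ ^ 2 * (∑ i ∈ Finset.range (k + 1), (η i) ^ 2) / 2) := by
          rw [Finset.sum_range_sub' (fun i => ‖x i - xstar‖ ^ 2)]
          ring
      _ ≤ A + B / 2 := by
          have := sq_nonneg ‖x (k + 1) - xstar‖
          rw [hBdef]; nlinarith [this]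
  -- choose the minimizing iterate
  obtain ⟨r, hrmem, hrmin⟩ := Finset.exists_min_image (Finset.range (k + 1)) φ
    ⟨0, Finset.mem_range.mpr (Nat.succ_pos k)⟩
  refine ⟨r, Nat.lt_succ_iff.mp (Finset.mem_range.mp hrmem), ?_⟩
  have hTmin : T * (φ r - c) ≤ A + B / 2 := by
    calc T * (φ r - c) = ∑ i ∈ Finset.range (k + 1), η i * (φ r - c) := by
          rw [← Finset.sum_mul]
      _ ≤ ∑ i ∈ Finset.range (k + 1), η i * (φ i - c) :=
          Finset.sum_le_sum fun i hi =>
            mul_le_mul_of_nonneg_left (sub_le_sub_right (hrmin i hi) c) (hη i).le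
      _ ≤ A + B / 2 := hsum
  have hfinal : φ r - c ≤ A / T + B / (2 * T) := by
    have h2T : (0:ℝ) < 2 * T := by linarith
    rw [div_add_div _ _ hTpos.ne' h2T.ne', le_div_iff₀ (mul_pos hTpos h2T)]
    nlinarith [mul_le_mul_of_nonneg_right hTmin h2T.le, hTpos]
  exact hfinal
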